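/- Let n, m, t be positive integers with t ≤ n, and let f : 𝔽₂ⁿ → 𝔽₂^m be a multi-output Boolean function. Then f is a t-th order correlation-immune function if and only if its Walsh transform satisfies ∑_{x ∈ 𝔽₂ⁿ} (−1)^{v·f(x) + u·x} = 0 for every nonzero v ∈ 𝔽₂^m and every u ∈ 𝔽₂ⁿ with 1 ≤ wt(u) ≤ t, where · denotes the inner product modulo 2 and wt(u) is the Hamming weight of u. -/

import Mathlib

noncomputable section

open Finset

/-- Inner product modulo 2 on `𝔽₂ⁿ`. -/
def dotp {n : ℕ} (c x : Fin n → ZMod 2) : ZMod 2 := ∑ j, c j * x j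

/-- Hamming weight of a vector in `𝔽₂ⁿ`. -/
def wt {n : ℕ} (c : Fin n → ZMod 2) : ℕ := (Finset.univ.filter fun j => c j ≠ 0).card

/-- `f` is `t`-th order correlation-immune: fixing any `t` coordinates does not
change the output distribution (counting form). -/
def CI {n : ℕ} {A : Type*} (t : ℕ) (f : (Fin n → ZMod 2) → A) : Prop :=
  ∀ S : Finset (Fin n), S.card = t → ∀ a : Fin n → ZMod 2, ∀ α : A,
    2 ^ t * Nat.card {x : Fin n → ZMod 2 // f x = α ∧ ∀ j ∈ S, x j = a j}
      = Nat.card {x : Fin n → ZMod 2 // f x = α}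

/-- Binary expansion of `k` as a vector in `𝔽₂ⁿ`, `k = ∑ x_j 2^j`. -/
def bin (n k : ℕ) : Fin n → ZMod 2 := fun j => ((k / 2 ^ (j : ℕ)) % 2 : ℕ)

/-- `ω i = exp(2π√-1 / 2^i)`, a primitive `2^i`-th root of unity in `ℂ`. -/
def ω (i : ℕ) : ℂ := Complex.exp (2 * Real.pi * Complex.I / 2 ^ i)

namespace S5
noncomputable def ε (z : ZMod 2) : ℂ := (-1) ^ z.val
lemma eps_zero : ε 0 = 1 := rfl
lemma val11 : ((1 + 1 : ZMod 2)).val = 0 := by decide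
lemma val1 : ((1 : ZMod 2)).val = 1 := by decide
lemma eps_add (a b : ZMod 2) : ε (a + b) = ε a * ε b := by
  simp only [ε, ZMod.val_add, ← pow_add]; exact (neg_one_pow_eq_pow_mod_two _).symm
lemma zmod2_eq_one {z : ZMod 2} (h : z ≠ 0) : z = 1 := by revert h; revert z; decide
lemma eps_of_ne {z : ZMod 2} (h : z ≠ 0) : ε z = -1 := by rw [zmod2_eq_one h]; simp [ε, val1]
end S5
namespace S5
lemma dotp_comm {n : ℕ} (u x : Fin n → ZMod 2) : dotp u x = dotp x u := by
  unfold dotp; exact Finset.sum_congr rfl fun j _ => mul_comm _ _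
lemma dotp_add_right {n : ℕ} (u x y : Fin n → ZMod 2) :
    dotp u (x + y) = dotp u x + dotp u y := by
  unfold dotp; simp [Pi.add_apply, mul_add, Finset.sum_add_distrib]
lemma dotp_single_right {n : ℕ} (u : Fin n → ZMod 2) (j : Fin n) (c : ZMod 2) :
    dotp u (Pi.single j c) = u j * c := by
  unfold dotp
  rw [Fintype.sum_eq_single j]
  · simp
  · intro i hi; simp [Pi.single_eq_of_ne hi]

lemma add_self_pi {n : ℕ} (d : Fin n → ZMod 2) : d + d = 0 := by
  funext j; simp [Pi.add_apply, CharTwo.add_self_eq_zero]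

lemma flip_sum {n : ℕ} (B : Finset (Fin n → ZMod 2)) (d : Fin n → ZMod 2)
    (hB : ∀ x ∈ B, x + d ∈ B) (g : (Fin n → ZMod 2) → ℂ)
    (hg : ∀ x ∈ B, g (x + d) = - g x) : ∑ x ∈ B, g x = 0 := by
  have key : ∑ x ∈ B, g x = ∑ x ∈ B, g (x + d) := by
    refine Finset.sum_nbij' (fun x => x + d) (fun x => x + d) hB hB ?_ ?_ ?_
    · intro x _; show x + d + d = x; rw [add_assoc, add_self_pi, add_zero]
    · intro x _; show x + d + d = x; rw [add_assoc, add_self_pi, add_zero]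
    · intro x _; show g x = g (x + d + d); rw [add_assoc, add_self_pi, add_zero]
  have h2 : ∑ x ∈ B, g x = - ∑ x ∈ B, g x := by
    calc ∑ x ∈ B, g x = ∑ x ∈ B, g (x + d) := key
    _ = ∑ x ∈ B, -g x := Finset.sum_congr rfl hg
    _ = -∑ x ∈ B, g x := by rw [Finset.sum_neg_distrib]
  have h3 : (2:ℂ) * ∑ x ∈ B, g x = 0 := by linear_combination h2
  simpa using h3

lemma charsum {n : ℕ} (u : Fin n → ZMod 2) :
    ∑ x : Fin n → ZMod 2, ε (dotp u x) = if u = 0 then (2:ℂ)^n else 0 := by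
  by_cases h : u = 0
  · subst h
    simp only [if_pos rfl]
    have : ∀ x : Fin n → ZMod 2, ε (dotp 0 x) = 1 := by
      intro x; unfold dotp; simp [eps_zero]
    rw [Finset.sum_congr rfl fun x _ => this x]
    simp [Finset.card_univ]
  · rw [if_neg h]
    obtain ⟨j, hj⟩ : ∃ j, u j ≠ 0 := by
      by_contra hc; push_neg at hc; exact h (funext hc)
    refine flip_sum _ (Pi.single j 1) (fun x _ => Finset.mem_univ _) _ ?_
    intro x _
    rw [dotp_add_right, dotp_single_right, mul_one, eps_add, eps_of_ne hj]
    ring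
end S5
namespace S5
def AS {n : ℕ} (S : Finset (Fin n)) : Finset (Fin n → ZMod 2) :=
  univ.filter fun a => ∀ j ∉ S, a j = 0

lemma mem_AS {n : ℕ} {S : Finset (Fin n)} {a : Fin n → ZMod 2} :
    a ∈ AS S ↔ ∀ j ∉ S, a j = 0 := by simp [AS]

lemma card_AS {n : ℕ} (S : Finset (Fin n)) : (AS S).card = 2 ^ S.card := by
  classical
  have h : (AS S).card = (univ : Finset ({ j // j ∈ S } → ZMod 2)).card := by
    refine Finset.card_nbij' (fun a (j : { j // j ∈ S }) => a j.1)
      (fun g i => if h : i ∈ S then g ⟨i, h⟩ else 0) ?_ ?_ ?_ ?_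
    · intro a _; exact Finset.mem_univ _
    · intro g _; rw [Finset.mem_coe, mem_AS]; intro j hj; simp [hj]
    · intro a ha; funext i
      by_cases hi : i ∈ S
      · simp [hi]
      · simp [hi, (mem_AS.mp ha) i hi]
    · intro g _; funext j; simp [j.2]
  rw [h, Finset.card_univ, Fintype.card_fun]
  simp [Fintype.card_coe]

def P {n : ℕ} (S : Finset (Fin n)) (x : Fin n → ZMod 2) : Fin n → ZMod 2 :=
  fun j => if j ∈ S then x j else 0

lemma P_mem_AS {n : ℕ} (S : Finset (Fin n)) (x : Fin n → ZMod 2) : P S x ∈ AS S := by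
  rw [mem_AS]; intro j hj; simp [P, hj]

lemma P_eq_iff {n : ℕ} {S : Finset (Fin n)} {a x : Fin n → ZMod 2} (ha : a ∈ AS S) :
    P S x = a ↔ ∀ j ∈ S, x j = a j := by
  constructor
  · intro h j hj; rw [← h]; simp [P, hj]
  · intro h; funext j
    by_cases hj : j ∈ S
    · simp [P, hj, h j hj]
    · simp [P, hj, (mem_AS.mp ha) j hj]

lemma dotp_P {n : ℕ} {S : Finset (Fin n)} {u : Fin n → ZMod 2}
    (hu : ∀ j ∉ S, u j = 0) (x : Fin n → ZMod 2) : dotp u (P S x) = dotp u x := by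
  unfold dotp
  refine Finset.sum_congr rfl fun j _ => ?_
  by_cases hj : j ∈ S
  · simp [P, hj]
  · simp [P, hj, hu j hj]
end S5
namespace S5
lemma dotp_add_left {n : ℕ} (u v x : Fin n → ZMod 2) :
    dotp (u + v) x = dotp u x + dotp v x := by
  rw [dotp_comm, dotp_add_right, dotp_comm x u, dotp_comm x v]

lemma zmod2_add_ne {a b : ZMod 2} (h : a ≠ b) : a + b ≠ 0 := by
  revert h; revert a b; decide

lemma charsum_AS {n : ℕ} {S : Finset (Fin n)} {w : Fin n → ZMod 2}
    {j : Fin n} (hjS : j ∈ S) (hw : w j ≠ 0) :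
    ∑ a ∈ AS S, ε (dotp w a) = 0 := by
  refine flip_sum _ (Pi.single j 1) ?_ _ ?_
  · intro a ha; rw [mem_AS]; intro i hi
    have hij : i ≠ j := fun h => hi (h ▸ hjS)
    simp [Pi.add_apply, (mem_AS.mp ha) i hi, Pi.single_eq_of_ne hij]
  · intro a _
    rw [dotp_add_right, dotp_single_right, mul_one, eps_add, eps_of_ne hw]
    ring

lemma ID1 {n : ℕ} {A : Type*} [DecidableEq A] (f : (Fin n → ZMod 2) → A)
    (S : Finset (Fin n)) (a : Fin n → ZMod 2) (α : A) :
    (2:ℂ) ^ S.card * ((univ.filter fun x => f x = α ∧ ∀ j ∈ S, x j = a j).card : ℂ)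
      = ∑ u ∈ AS S, ε (dotp u a) * ∑ x ∈ univ.filter (fun x => f x = α), ε (dotp u x) := by
  classical
  have step1 : ∀ u ∈ AS S, ε (dotp u a) * ∑ x ∈ univ.filter (fun x => f x = α), ε (dotp u x)
      = ∑ x ∈ univ.filter (fun x => f x = α), ε (dotp u (a + x)) := by
    intro u _
    rw [Finset.mul_sum]
    exact Finset.sum_congr rfl fun x _ => by rw [dotp_add_right, eps_add]
  rw [Finset.sum_congr rfl step1, Finset.sum_comm]
  have inner : ∀ x ∈ univ.filter (fun x => f x = α),
      ∑ u ∈ AS S, ε (dotp u (a + x))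
        = if (∀ j ∈ S, x j = a j) then (2:ℂ) ^ S.card else 0 := by
    intro x _
    by_cases hx : ∀ j ∈ S, x j = a j
    · rw [if_pos hx]
      have h1 : ∀ u ∈ AS S, ε (dotp u (a + x)) = 1 := by
        intro u hu
        have hz : dotp u (a + x) = 0 := by
          unfold dotp
          refine Finset.sum_eq_zero fun j _ => ?_
          by_cases hj : j ∈ S
          · have : a j + x j = 0 := by rw [hx j hj]; exact CharTwo.add_self_eq_zero _
            simp [Pi.add_apply, this]
          · simp [(mem_AS.mp hu) j hj]
        rw [hz, eps_zero]
      rw [Finset.sum_congr rfl h1, Finset.sum_const, card_AS]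
      simp
    · rw [if_neg hx]
      push_neg at hx
      obtain ⟨j, hjS, hj⟩ := hx
      have key : (a + x) j ≠ 0 := by
        simpa [Pi.add_apply] using zmod2_add_ne (fun h => hj h.symm)
      refine flip_sum _ (Pi.single j 1) ?_ _ ?_
      · intro u hu; rw [mem_AS]; intro i hi
        have hij : i ≠ j := fun h => hi (h ▸ hjS)
        simp [Pi.add_apply, (mem_AS.mp hu) i hi, Pi.single_eq_of_ne hij]
      · intro u _
        rw [dotp_add_left, eps_add, dotp_comm (Pi.single j 1), dotp_single_right,
          mul_one, eps_of_ne key]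
        ring
  rw [Finset.sum_congr rfl inner, ← Finset.sum_filter, Finset.sum_const,
    Finset.filter_filter, nsmul_eq_mul, mul_comm]

lemma ID2 {n : ℕ} {A : Type*} [DecidableEq A] (f : (Fin n → ZMod 2) → A)
    {S : Finset (Fin n)} {u : Fin n → ZMod 2} (hu : ∀ j ∉ S, u j = 0) (α : A) :
    ∑ x ∈ univ.filter (fun x => f x = α), ε (dotp u x)
      = ∑ a ∈ AS S, ε (dotp u a) *
          ((univ.filter fun x => f x = α ∧ ∀ j ∈ S, x j = a j).card : ℂ) := by
  classical
  have maps : ∀ x ∈ univ.filter (fun x => f x = α), P S x ∈ AS S := fun x _ => P_mem_AS S x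
  rw [← Finset.sum_fiberwise_of_maps_to maps (fun x => ε (dotp u x))]
  refine Finset.sum_congr rfl fun a ha => ?_
  have h1 : ∀ x ∈ (univ.filter fun x => f x = α).filter (fun x => P S x = a),
      ε (dotp u x) = ε (dotp u a) := by
    intro x hx
    obtain ⟨-, hPx⟩ := Finset.mem_filter.mp hx
    rw [← hPx, dotp_P hu]
  rw [Finset.sum_congr rfl h1, Finset.sum_const, nsmul_eq_mul, mul_comm]
  congr 2
  rw [Finset.filter_filter]
  have : (univ.filter fun x => f x = α ∧ P S x = a)
       = (univ.filter fun x => f x = α ∧ ∀ j ∈ S, x j = a j) := by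
    refine Finset.filter_congr fun x _ => ?_
    exact and_congr_right fun _ => P_eq_iff ha
  rw [this]
end S5

open S5 in
/-- Walsh-transform characterization: `f : 𝔽₂ⁿ → 𝔽₂^m` is `t`-th order correlation-immune
iff `f̂(u,v) = ∑_x (-1)^{v·f(x)+u·x} = 0` for every nonzero `v` and every `u` with
`1 ≤ wt(u) ≤ t`. -/
theorem stmt5 (n m t : ℕ) (hn : 0 < n) (hm : 0 < m) (ht : 0 < t) (htn : t ≤ n)
    (f : (Fin n → ZMod 2) → (Fin m → ZMod 2)) :
    CI t f ↔ ∀ v : Fin m → ZMod 2, v ≠ 0 → ∀ u : Fin n → ZMod 2, 1 ≤ wt u → wt u ≤ t →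
      ∑ x : Fin n → ZMod 2, (-1 : ℂ) ^ ((∑ i, v i * f x i) + dotp u x).val = 0 := by
  classical
  have natcard : ∀ (p : (Fin n → ZMod 2) → Prop) (_ : DecidablePred p),
      Nat.card {x // p x} = (univ.filter p).card := by
    intro p inst
    rw [Nat.card_eq_fintype_card, Fintype.card_subtype]
  have sum_form : ∀ (v : Fin m → ZMod 2) (u : Fin n → ZMod 2),
      (∑ x : Fin n → ZMod 2, (-1 : ℂ) ^ ((∑ i, v i * f x i) + dotp u x).val)
        = ∑ x : Fin n → ZMod 2, ε (dotp v (f x)) * ε (dotp u x) := by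
    intro v u
    refine Finset.sum_congr rfl fun x _ => ?_
    rw [← eps_add]
    rfl
  constructor
  · -- CI → Walsh zero
    intro hCI v hv u hw1 hw2
    obtain ⟨S, hSsub, hScard⟩ : ∃ S : Finset (Fin n),
        (univ.filter fun j => u j ≠ 0) ⊆ S ∧ S.card = t :=
      Finset.exists_superset_card_eq hw2 (by simpa using htn)
    have hu0 : ∀ j ∉ S, u j = 0 := by
      intro j hj
      by_contra hne
      exact hj (hSsub (Finset.mem_filter.mpr ⟨Finset.mem_univ _, hne⟩))
    obtain ⟨j, hjmem⟩ : ∃ j, j ∈ univ.filter fun j => u j ≠ 0 := by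
      have : (univ.filter fun j => u j ≠ 0).Nonempty := Finset.card_pos.mp hw1
      exact this
    have hju : u j ≠ 0 := (Finset.mem_filter.mp hjmem).2
    have hjS : j ∈ S := hSsub hjmem
    have Phi0 : ∀ α : Fin m → ZMod 2,
        ∑ x ∈ univ.filter (fun x => f x = α), ε (dotp u x) = 0 := by
      intro α
      rw [ID2 f hu0 α]
      have hc : ∀ a : Fin n → ZMod 2,
          ((univ.filter fun x => f x = α ∧ ∀ j ∈ S, x j = a j).card : ℂ)
            = ((univ.filter fun x => f x = α).card : ℂ) / 2 ^ t := by
        intro a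
        have := hCI S hScard a α
        rw [natcard _ _, natcard _ _] at this
        have h2 : ((2:ℂ) ^ t) * ((univ.filter fun x => f x = α ∧ ∀ j ∈ S, x j = a j).card : ℂ)
            = ((univ.filter fun x => f x = α).card : ℂ) := by exact_mod_cast this
        rw [eq_div_iff (pow_ne_zero t (by norm_num : (2:ℂ) ≠ 0))]
        linear_combination h2
      calc ∑ a ∈ AS S, ε (dotp u a) *
              ((univ.filter fun x => f x = α ∧ ∀ j ∈ S, x j = a j).card : ℂ)
          = ∑ a ∈ AS S, ε (dotp u a) * (((univ.filter fun x => f x = α).card : ℂ) / 2 ^ t) :=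
            Finset.sum_congr rfl fun a _ => by rw [hc a]
        _ = (((univ.filter fun x => f x = α).card : ℂ) / 2 ^ t) * ∑ a ∈ AS S, ε (dotp u a) := by
            rw [Finset.mul_sum]; exact Finset.sum_congr rfl fun a _ => mul_comm _ _
        _ = 0 := by rw [charsum_AS hjS hju, mul_zero]
    rw [sum_form]
    rw [← Finset.sum_fiberwise_of_maps_to (fun x _ => Finset.mem_univ (f x))
      (fun x => ε (dotp v (f x)) * ε (dotp u x))]
    refine Finset.sum_eq_zero fun α _ => ?_
    have : ∀ x ∈ univ.filter (fun x => f x = α),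
        ε (dotp v (f x)) * ε (dotp u x) = ε (dotp v α) * ε (dotp u x) := by
      intro x hx
      rw [(Finset.mem_filter.mp hx).2]
    rw [Finset.sum_congr rfl this, ← Finset.mul_sum, Phi0 α, mul_zero]
  · -- Walsh zero → CI
    intro hW S hScard a α
    have Phi0 : ∀ u : Fin n → ZMod 2, u ≠ 0 → (∀ j ∉ S, u j = 0) →
        ∀ α' : Fin m → ZMod 2,
          ∑ x ∈ univ.filter (fun x => f x = α'), ε (dotp u x) = 0 := by
      intro u hu hu0 α'
      have hw1 : 1 ≤ wt u := by
        rw [Nat.one_le_iff_ne_zero]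
        intro h
        apply hu
        funext j
        by_contra hne
        have : j ∈ univ.filter fun j => u j ≠ 0 := Finset.mem_filter.mpr ⟨Finset.mem_univ _, hne⟩
        simpa [wt, Finset.card_eq_zero.mp h] using this
      have hw2 : wt u ≤ t := by
        rw [← hScard]
        apply Finset.card_le_card
        intro j hj
        by_contra hjS
        exact (Finset.mem_filter.mp hj).2 (hu0 j hjS)
      have key : (2:ℂ) ^ m * ∑ x ∈ univ.filter (fun x => f x = α'), ε (dotp u x)
          = ∑ v : Fin m → ZMod 2, ε (dotp v α') *
              ∑ x : Fin n → ZMod 2, ε (dotp v (f x)) * ε (dotp u x) := by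
        have swap : ∑ v : Fin m → ZMod 2, ε (dotp v α') *
              ∑ x : Fin n → ZMod 2, ε (dotp v (f x)) * ε (dotp u x)
            = ∑ x : Fin n → ZMod 2, ε (dotp u x) *
                ∑ v : Fin m → ZMod 2, ε (dotp v (α' + f x)) := by
          simp_rw [Finset.mul_sum]
          rw [Finset.sum_comm]
          refine Finset.sum_congr rfl fun x _ => Finset.sum_congr rfl fun v _ => by
            rw [dotp_add_right, eps_add]; ring
        rw [swap]
        symm
        have inner : ∀ x : Fin n → ZMod 2,
            ∑ v : Fin m → ZMod 2, ε (dotp v (α' + f x))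
              = if f x = α' then (2:ℂ) ^ m else 0 := by
          intro x
          have hsw : ∀ v : Fin m → ZMod 2, ε (dotp v (α' + f x)) = ε (dotp (α' + f x) v) :=
            fun v => by rw [dotp_comm]
          rw [Finset.sum_congr rfl fun v _ => hsw v, charsum]
          congr 1
          simp only [eq_iff_iff]
          constructor
          · intro h
            have : α' + (α' + f x) = α' + 0 := by rw [h]
            rw [← add_assoc, add_self_pi, zero_add, add_zero] at this
            exact this
          · intro h
            rw [h, add_self_pi]
        calc ∑ x : Fin n → ZMod 2, ε (dotp u x) *
                ∑ v : Fin m → ZMod 2, ε (dotp v (α' + f x))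
            = ∑ x : Fin n → ZMod 2, (if f x = α' then ε (dotp u x) * (2:ℂ)^m else 0) := by
              refine Finset.sum_congr rfl fun x _ => ?_
              rw [inner x]
              split <;> simp
          _ = ∑ x ∈ univ.filter (fun x => f x = α'), ε (dotp u x) * (2:ℂ)^m := by
              rw [Finset.sum_filter]
          _ = (2:ℂ)^m * ∑ x ∈ univ.filter (fun x => f x = α'), ε (dotp u x) := by
              rw [← Finset.sum_mul, mul_comm]
      have hz : ∑ v : Fin m → ZMod 2, ε (dotp v α') *
          ∑ x : Fin n → ZMod 2, ε (dotp v (f x)) * ε (dotp u x) = 0 := by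
        refine Finset.sum_eq_zero fun v _ => ?_
        by_cases hv : v = 0
        · subst hv
          have h1 : ∑ x : Fin n → ZMod 2, ε (dotp (0:Fin m → ZMod 2) (f x)) * ε (dotp u x)
              = ∑ x : Fin n → ZMod 2, ε (dotp u x) := by
            refine Finset.sum_congr rfl fun x _ => ?_
            have : dotp (0 : Fin m → ZMod 2) (f x) = 0 := by simp [dotp]
            rw [this, eps_zero, one_mul]
          rw [h1, charsum, if_neg hu, mul_zero]
        · rw [← sum_form v u, hW v hv u hw1 hw2, mul_zero]
      rw [hz] at key
      exact (mul_eq_zero.mp key).resolve_left (pow_ne_zero m (by norm_num : (2:ℂ) ≠ 0))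
    have mem0 : (0 : Fin n → ZMod 2) ∈ AS S := mem_AS.mpr fun j _ => rfl
    have main : (2:ℂ) ^ S.card *
        ((univ.filter fun x => f x = α ∧ ∀ j ∈ S, x j = a j).card : ℂ)
        = ((univ.filter fun x => f x = α).card : ℂ) := by
      rw [ID1 f S a α]
      rw [Finset.sum_eq_single_of_mem (0 : Fin n → ZMod 2) mem0
        (fun u huAS hu => by rw [Phi0 u hu (mem_AS.mp huAS) α, mul_zero])]
      have h0a : dotp (0 : Fin n → ZMod 2) a = 0 := by simp [dotp]
      have h1 : ∀ x ∈ univ.filter (fun x => f x = α),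
          ε (dotp (0 : Fin n → ZMod 2) x) = 1 := by
        intro x _
        have : dotp (0 : Fin n → ZMod 2) x = 0 := by simp [dotp]
        rw [this, eps_zero]
      rw [h0a, eps_zero, one_mul, Finset.sum_congr rfl h1, Finset.sum_const,
        nsmul_eq_mul, mul_one]
    rw [hScard] at main
    rw [natcard _ _, natcard _ _]
    exact_mod_cast main
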